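/- Let 0 < α < 1, λ ∈ ℝ, τ > 0, and (v^k)_{k≥0} a real sequence with v^{-1} = 0. Define the average A_t^α v^n = (1 - α/2) v^n + (α/2) v^{n-1}. Then for every n ≥ 1: (A_t^α v^n) · δ_t^{α,λ} v^n ≥ (1/2)[(α/2)e^{λτ} + (1 - α/2)] e^{-(α/2)λτ} δ_t^{α,2λ}(v^n)² + ((2 - α - e^{λτ})/4) τ^α e^{-(α/2)λτ} (δ_t^{α,λ} v^n)². -/

import Mathlib

open Finset

noncomputable def binom (α : ℝ) (k : ℕ) : ℝ :=
  (∏ i ∈ Finset.range k, (α - i)) / (Nat.factorial k)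

noncomputable def g (α : ℝ) (k : ℕ) : ℝ := (-1) ^ k * binom α k

/-- `δ_t^{α,λ} v^n = τ^{-α} ∑_{k=0}^n e^{-(k-α/2)λτ} g_k^α v^{n-k}`. -/
noncomputable def delta (α lam τ : ℝ) (v : ℕ → ℝ) (n : ℕ) : ℝ :=
  τ ^ (-α) * ∑ k ∈ Finset.range (n + 1),
    Real.exp (-((k : ℝ) - α / 2) * lam * τ) * g α k * v (n - k)

/-- The average operator `𝒜_t^α v^n = (1 - α/2) v^n + (α/2) v^{n-1}`. -/
noncomputable def avg (α : ℝ) (v : ℕ → ℝ) (n : ℕ) : ℝ :=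
  (1 - α / 2) * v n + (α / 2) * v (n - 1)

lemma neg_prod (α : ℝ) (k : ℕ) :
    ∏ i ∈ range k, ((i : ℝ) - α) = (-1) ^ k * ∏ i ∈ range k, (α - (i : ℝ)) := by
  induction k with
  | zero => simp
  | succ k ih => rw [prod_range_succ, prod_range_succ, ih]; ring

lemma g_eq_prod (α : ℝ) (k : ℕ) :
    g α k = (∏ i ∈ range k, ((i : ℝ) - α)) / (Nat.factorial k) := by
  rw [g, binom, neg_prod]
  ring

lemma g_zero (α : ℝ) : g α 0 = 1 := by simp [g, binom]

lemma g_one (α : ℝ) : g α 1 = -α := by simp [g, binom]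

lemma g_nonpos {α : ℝ} (hα0 : 0 < α) (hα1 : α < 1) {k : ℕ} (hk : 1 ≤ k) :
    g α k ≤ 0 := by
  rw [g_eq_prod]
  apply div_nonpos_of_nonpos_of_nonneg _ (by positivity)
  rw [range_eq_Ico, prod_eq_prod_Ico_succ_bot hk]
  have h1 : (0:ℝ) ≤ ∏ i ∈ Ico 1 k, ((i:ℝ) - α) := by
    apply prod_nonneg
    intro i hi
    have : 1 ≤ i := (mem_Ico.mp hi).1
    have : (1:ℝ) ≤ i := by exact_mod_cast this
    linarith
  push_cast
  nlinarith

lemma sum_g (α : ℝ) (n : ℕ) :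
    ∑ k ∈ range (n + 1), g α k = (∏ i ∈ range n, ((i : ℝ) + 1 - α)) / (Nat.factorial n) := by
  induction n with
  | zero => simp [g_zero]
  | succ n ih =>
    rw [sum_range_succ, ih, g_eq_prod]
    have hp : ∏ i ∈ range (n+1), ((i:ℝ) - α) = (-α) * ∏ i ∈ range n, ((i:ℝ) + 1 - α) := by
      rw [range_eq_Ico, prod_eq_prod_Ico_succ_bot (Nat.succ_pos n)]
      push_cast
      congr 1
      · norm_num
      · rw [Finset.prod_Ico_eq_prod_range]
        simp only [Nat.succ_sub_one, ← range_eq_Ico]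
        apply prod_congr rfl
        intro i _
        push_cast
        ring
    rw [hp, Nat.factorial_succ]
    push_cast
    rw [prod_range_succ]
    have hfn : (0:ℝ) < Nat.factorial n := by positivity
    field_simp
    ring

lemma sum_g_nonneg {α : ℝ} (hα1 : α < 1) (n : ℕ) :
    0 ≤ ∑ k ∈ range (n + 1), g α k := by
  rw [sum_g]
  apply div_nonneg _ (by positivity)
  apply prod_nonneg
  intro i _
  have : (0:ℝ) ≤ i := Nat.cast_nonneg i
  linarith

lemma sum_c_le_one {α : ℝ} (hα1 : α < 1) (n : ℕ) :
    ∑ k ∈ Ico 1 (n + 1), (-(g α k)) ≤ 1 := by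
  have h := sum_g_nonneg hα1 n
  rw [range_eq_Ico, sum_eq_sum_Ico_succ_bot (Nat.succ_pos n)] at h
  rw [g_zero] at h
  rw [sum_neg_distrib]
  linarith

-- Core inequality (A): 2 a₀ S ≥ Q + S²
lemma coreA {α : ℝ} (hα0 : 0 < α) (hα1 : α < 1) (n : ℕ) (a : ℕ → ℝ) :
    (∑ k ∈ range (n + 1), g α k * (a k) ^ 2) + (∑ k ∈ range (n + 1), g α k * a k) ^ 2 ≤
      2 * a 0 * (∑ k ∈ range (n + 1), g α k * a k) := by
  set S := ∑ k ∈ range (n + 1), g α k * a k with hS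
  set Q := ∑ k ∈ range (n + 1), g α k * (a k) ^ 2 with hQ
  set X1 := ∑ k ∈ Ico 1 (n + 1), (-(g α k)) * a k with hX1
  set X2 := ∑ k ∈ Ico 1 (n + 1), (-(g α k)) * (a k) ^ 2 with hX2
  have hSa : S = a 0 - X1 := by
    rw [hS, range_eq_Ico, sum_eq_sum_Ico_succ_bot (Nat.succ_pos n), g_zero, hX1]
    simp only [neg_mul, sum_neg_distrib]
    ring
  have hQa : Q = (a 0) ^ 2 - X2 := by
    rw [hQ, range_eq_Ico, sum_eq_sum_Ico_succ_bot (Nat.succ_pos n), g_zero, hX2]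
    simp only [neg_mul, sum_neg_distrib]
    ring
  have hcs : X1 ^ 2 ≤ (∑ k ∈ Ico 1 (n + 1), (-(g α k))) * X2 := by
    have := Finset.sum_mul_sq_le_sq_mul_sq (Ico 1 (n + 1))
      (fun k => Real.sqrt (-(g α k))) (fun k => Real.sqrt (-(g α k)) * a k)
    have e1 : ∑ k ∈ Ico 1 (n+1), Real.sqrt (-(g α k)) * (Real.sqrt (-(g α k)) * a k) = X1 := by
      apply sum_congr rfl
      intro k hk
      have h0 : 0 ≤ -(g α k) := by
        have := g_nonpos hα0 hα1 (mem_Ico.mp hk).1; linarith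
      rw [← mul_assoc, Real.mul_self_sqrt h0]
    have e2 : ∑ k ∈ Ico 1 (n+1), (Real.sqrt (-(g α k))) ^ 2 = ∑ k ∈ Ico 1 (n+1), (-(g α k)) := by
      apply sum_congr rfl
      intro k hk
      have h0 : 0 ≤ -(g α k) := by
        have := g_nonpos hα0 hα1 (mem_Ico.mp hk).1; linarith
      rw [Real.sq_sqrt h0]
    have e3 : ∑ k ∈ Ico 1 (n+1), (Real.sqrt (-(g α k)) * a k) ^ 2 = X2 := by
      apply sum_congr rfl
      intro k hk
      have h0 : 0 ≤ -(g α k) := by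
        have := g_nonpos hα0 hα1 (mem_Ico.mp hk).1; linarith
      rw [mul_pow, Real.sq_sqrt h0]
    rw [e1, e2, e3] at this
    exact this
  have hX2nn : 0 ≤ X2 := by
    apply sum_nonneg
    intro k hk
    have := g_nonpos hα0 hα1 (mem_Ico.mp hk).1
    have h2 : (0:ℝ) ≤ a k ^ 2 := sq_nonneg _
    nlinarith
  have hc1 := sum_c_le_one hα1 n
  have hX1sq : X1 ^ 2 ≤ X2 := le_trans hcs (by nlinarith)
  rw [hSa, hQa]
  nlinarith

-- Core inequality (B): 2 α a₁ S ≥ α Q − S²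
lemma coreB {α : ℝ} (hα0 : 0 < α) (hα1 : α < 1) (n : ℕ) (hn : 1 ≤ n) (a : ℕ → ℝ) :
    α * (∑ k ∈ range (n + 1), g α k * (a k) ^ 2) - (∑ k ∈ range (n + 1), g α k * a k) ^ 2 ≤
      2 * α * a 1 * (∑ k ∈ range (n + 1), g α k * a k) := by
  have h1n : 1 < n + 1 := by omega
  set S := ∑ k ∈ range (n + 1), g α k * a k with hS
  set Q := ∑ k ∈ range (n + 1), g α k * (a k) ^ 2 with hQ
  set X1 := ∑ k ∈ Ico 2 (n + 1), (-(g α k)) * a k with hX1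
  set X2 := ∑ k ∈ Ico 2 (n + 1), (-(g α k)) * (a k) ^ 2 with hX2
  have hgle : ∀ k ∈ Ico 2 (n + 1), 0 ≤ -(g α k) := by
    intro k hk
    have h2 : 2 ≤ k := (mem_Ico.mp hk).1
    have := g_nonpos hα0 hα1 (le_trans one_le_two h2)
    linarith
  have hSa : S = a 0 - α * a 1 - X1 := by
    rw [hS, range_eq_Ico, sum_eq_sum_Ico_succ_bot (Nat.succ_pos n),
      sum_eq_sum_Ico_succ_bot h1n, g_zero, g_one, hX1]
    simp only [neg_mul, sum_neg_distrib]
    norm_num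
    ring
  have hQa : Q = (a 0) ^ 2 - α * (a 1) ^ 2 - X2 := by
    rw [hQ, range_eq_Ico, sum_eq_sum_Ico_succ_bot (Nat.succ_pos n),
      sum_eq_sum_Ico_succ_bot h1n, g_zero, g_one, hX2]
    simp only [neg_mul, sum_neg_distrib]
    norm_num
    ring
  set T := a 0 - X1 with hT
  have hsum_c : α + ∑ k ∈ Ico 2 (n + 1), (-(g α k)) ≤ 1 := by
    have := sum_c_le_one hα1 n
    rw [sum_eq_sum_Ico_succ_bot h1n, g_one] at this
    linarith
  have hsqa : Real.sqrt α ≠ 0 := by positivity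
  -- Cauchy–Schwarz
  set f : ℕ → ℝ := fun k => if k = 0 then Real.sqrt α else if k = 1 then 0
    else Real.sqrt (-(g α k)) with hf
  set h : ℕ → ℝ := fun k => if k = 0 then T / Real.sqrt α else if k = 1 then 0
    else Real.sqrt (-(g α k)) * a k with hh
  have key : (a 0) ^ 2 ≤ T ^ 2 / α + X2 := by
    have cs := Finset.sum_mul_sq_le_sq_mul_sq (range (n + 1)) f h
    have e1 : ∑ k ∈ range (n + 1), f k * h k = a 0 := by
      rw [range_eq_Ico, sum_eq_sum_Ico_succ_bot (Nat.succ_pos n),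
        sum_eq_sum_Ico_succ_bot h1n]
      have t0 : f 0 * h 0 = T := by
        simp only [hf, hh, if_pos rfl]
        field_simp
      have t1 : f 1 * h 1 = 0 := by norm_num [hf, hh]
      have t2 : ∑ k ∈ Ico 2 (n + 1), f k * h k = X1 := by
        apply sum_congr rfl
        intro k hk
        have h2 : 2 ≤ k := (mem_Ico.mp hk).1
        have hk0 : k ≠ 0 := by omega
        have hk1 : k ≠ 1 := by omega
        simp only [hf, hh, if_neg hk0, if_neg hk1]
        rw [← mul_assoc, Real.mul_self_sqrt (hgle k hk)]
      rw [t0, t1, t2, hT]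
      ring
    have e2 : ∑ k ∈ range (n + 1), (f k) ^ 2 = α + ∑ k ∈ Ico 2 (n + 1), (-(g α k)) := by
      rw [range_eq_Ico, sum_eq_sum_Ico_succ_bot (Nat.succ_pos n),
        sum_eq_sum_Ico_succ_bot h1n]
      have t0 : (f 0) ^ 2 = α := by
        simp only [hf, if_pos rfl]
        exact Real.sq_sqrt hα0.le
      have t1 : (f 1) ^ 2 = 0 := by norm_num [hf]
      have t2 : ∑ k ∈ Ico 2 (n + 1), (f k) ^ 2 = ∑ k ∈ Ico 2 (n + 1), (-(g α k)) := by
        apply sum_congr rfl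
        intro k hk
        have h2 : 2 ≤ k := (mem_Ico.mp hk).1
        have hk0 : k ≠ 0 := by omega
        have hk1 : k ≠ 1 := by omega
        simp only [hf, if_neg hk0, if_neg hk1]
        exact Real.sq_sqrt (hgle k hk)
      rw [t0, t1, t2]
      ring
    have e3 : ∑ k ∈ range (n + 1), (h k) ^ 2 = T ^ 2 / α + X2 := by
      rw [range_eq_Ico, sum_eq_sum_Ico_succ_bot (Nat.succ_pos n),
        sum_eq_sum_Ico_succ_bot h1n]
      have t0 : (h 0) ^ 2 = T ^ 2 / α := by
        simp only [hh, if_pos rfl]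
        rw [div_pow, Real.sq_sqrt hα0.le]
      have t1 : (h 1) ^ 2 = 0 := by norm_num [hh]
      have t2 : ∑ k ∈ Ico 2 (n + 1), (h k) ^ 2 = X2 := by
        apply sum_congr rfl
        intro k hk
        have h2 : 2 ≤ k := (mem_Ico.mp hk).1
        have hk0 : k ≠ 0 := by omega
        have hk1 : k ≠ 1 := by omega
        simp only [hh, if_neg hk0, if_neg hk1]
        rw [mul_pow, Real.sq_sqrt (hgle k hk)]
      rw [t0, t1, t2]
      ring
    rw [e1, e2, e3] at cs
    have hrhs : 0 ≤ T ^ 2 / α + X2 := by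
      have : 0 ≤ X2 := by
        apply sum_nonneg
        intro k hk
        have := hgle k hk
        have h2 : (0:ℝ) ≤ a k ^ 2 := sq_nonneg _
        nlinarith
      positivity
    nlinarith
  have keyα : α * (a 0) ^ 2 ≤ T ^ 2 + α * X2 := by
    have := mul_le_mul_of_nonneg_left key hα0.le
    rw [mul_add, mul_div_cancel₀ _ (ne_of_gt hα0)] at this
    linarith
  rw [hT] at keyα
  have id1 : α * ((a 0) ^ 2 - α * (a 1) ^ 2 - X2) - (a 0 - α * a 1 - X1) ^ 2 -
      2 * α * a 1 * (a 0 - α * a 1 - X1) =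
      α * (a 0) ^ 2 - α * X2 - (a 0 - X1) ^ 2 := by ring
  rw [hSa, hQa]
  linarith

theorem stmt_14 (α lam τ : ℝ) (hα0 : 0 < α) (hα1 : α < 1) (hτ : 0 < τ)
    (v : ℕ → ℝ) (n : ℕ) (hn : 1 ≤ n) :
    avg α v n * delta α lam τ v n ≥
      (1 / 2) * ((α / 2) * Real.exp (lam * τ) + (1 - α / 2)) *
          Real.exp (-(α / 2) * lam * τ) * delta α (2 * lam) τ (fun k => (v k) ^ 2) n +
        ((2 - α - Real.exp (lam * τ)) / 4) * τ ^ α * Real.exp (-(α / 2) * lam * τ) *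
          (delta α lam τ v n) ^ 2 := by
  set a : ℕ → ℝ := fun k => Real.exp ((α / 2 - (k : ℝ)) * lam * τ) * v (n - k) with ha
  set S := ∑ k ∈ range (n + 1), g α k * a k with hS
  set Q := ∑ k ∈ range (n + 1), g α k * (a k) ^ 2 with hQ
  set E := Real.exp (lam * τ) with hE
  set M := Real.exp (-(α / 2) * lam * τ) with hM
  have hd1 : delta α lam τ v n = τ ^ (-α) * S := by
    rw [delta, hS]
    congr 1
    apply sum_congr rfl
    intro k _
    rw [ha]
    have : -((k : ℝ) - α / 2) * lam * τ = (α / 2 - (k : ℝ)) * lam * τ := by ring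
    rw [this]
    ring
  have hd2 : delta α (2 * lam) τ (fun k => (v k) ^ 2) n = τ ^ (-α) * Q := by
    rw [delta, hQ]
    congr 1
    apply sum_congr rfl
    intro k _
    rw [ha]
    simp only
    have hexp : Real.exp (-((k : ℝ) - α / 2) * (2 * lam) * τ) =
        Real.exp ((α / 2 - (k : ℝ)) * lam * τ) ^ 2 := by
      rw [pow_two, ← Real.exp_add]
      congr 1
      ring
    rw [hexp, mul_pow]
    ring
  have hv0 : v n = M * a 0 := by
    rw [ha, hM]
    simp only [Nat.sub_zero, Nat.cast_zero]
    rw [← mul_assoc, ← Real.exp_add]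
    have : -(α / 2) * lam * τ + (α / 2 - 0) * lam * τ = 0 := by ring
    rw [this, Real.exp_zero, one_mul]
  have hv1 : v (n - 1) = M * E * a 1 := by
    rw [ha, hM, hE]
    simp only [Nat.cast_one]
    rw [mul_assoc, ← mul_assoc (Real.exp (lam * τ)), ← Real.exp_add, ← mul_assoc,
      ← Real.exp_add]
    have : -(α / 2) * lam * τ + (lam * τ + (α / 2 - 1) * lam * τ) = 0 := by ring
    rw [this, Real.exp_zero, one_mul]
  have hA := coreA hα0 hα1 n a
  have hB := coreB hα0 hα1 n hn a
  rw [← hS, ← hQ] at hA hB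
  have hE0 : 0 < E := Real.exp_pos _
  have k1 := mul_le_mul_of_nonneg_left hA (show (0:ℝ) ≤ (1 - α / 2) / 2 by linarith)
  have k2 := mul_le_mul_of_nonneg_left hB (show (0:ℝ) ≤ E / 4 by positivity)
  have key : (1 / 2) * ((α / 2) * E + (1 - α / 2)) * Q + ((2 - α - E) / 4) * S ^ 2 ≤
      ((1 - α / 2) * a 0 + (α / 2) * E * a 1) * S := by nlinarith [k1, k2]
  have hP : (0:ℝ) < τ ^ (-α) := Real.rpow_pos_of_pos hτ _
  have hM0 : (0:ℝ) < M := Real.exp_pos _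
  have h1 : (τ:ℝ) ^ α * τ ^ (-α) = 1 := by
    rw [← Real.rpow_add hτ]
    simp
  have hMP : (0:ℝ) ≤ M * τ ^ (-α) := by positivity
  have key2 := mul_le_mul_of_nonneg_left key hMP
  rw [ge_iff_le, avg, hd1, hd2, hv0, hv1]
  have hps : (τ:ℝ) ^ α * M * (τ ^ (-α) * S) ^ 2 = M * (τ ^ (-α) * S ^ 2) := by
    calc (τ:ℝ) ^ α * M * (τ ^ (-α) * S) ^ 2
        = ((τ:ℝ) ^ α * τ ^ (-α)) * (M * (τ ^ (-α) * S ^ 2)) := by ring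
      _ = M * (τ ^ (-α) * S ^ 2) := by rw [h1]; ring
  calc (1 / 2) * ((α / 2) * E + (1 - α / 2)) * M * (τ ^ (-α) * Q) +
        ((2 - α - E) / 4) * τ ^ α * M * (τ ^ (-α) * S) ^ 2
      = M * τ ^ (-α) * ((1 / 2) * ((α / 2) * E + (1 - α / 2)) * Q +
          ((2 - α - E) / 4) * S ^ 2) := by
        have h2 : ((2 - α - E) / 4) * τ ^ α * M * (τ ^ (-α) * S) ^ 2 =
            M * τ ^ (-α) * (((2 - α - E) / 4) * S ^ 2) := by
          calc ((2 - α - E) / 4) * τ ^ α * M * (τ ^ (-α) * S) ^ 2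
              = ((τ:ℝ) ^ α * τ ^ (-α)) * (M * τ ^ (-α) * (((2 - α - E) / 4) * S ^ 2)) := by
                ring
            _ = _ := by rw [h1]; ring
        rw [h2]
        ring
    _ ≤ M * τ ^ (-α) * (((1 - α / 2) * a 0 + (α / 2) * E * a 1) * S) := key2
    _ = ((1 - α / 2) * (M * a 0) + α / 2 * (M * E * a 1)) * (τ ^ (-α) * S) := by ring
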